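/- The Stone–Čech remainder βℕ∖ℕ (the complement of the image of ℕ in its Stone–Čech compactification) admits an uncountable family of pairwise disjoint nonempty open subsets; in particular, βℕ∖ℕ does not have the countable chain condition, even though βℕ does. -/

import Mathlib

/-- A topological space has the countable chain condition (CCC) if every family of
pairwise disjoint nonempty open subsets is countable. -/
def TopCCC (X : Type*) [TopologicalSpace X] : Prop :=
  ∀ 𝒰 : Set (Set X), (∀ U ∈ 𝒰, IsOpen U) → (∀ U ∈ 𝒰, U.Nonempty) →
    𝒰.Pairwise Disjoint → 𝒰.Countable

open Set Function
open scoped Classical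

/-- The characteristic function of `A ⊆ ℕ` with values in `Bool`. -/
noncomputable def chiB (A : Set ℕ) : ℕ → Bool := fun n => decide (n ∈ A)

/-- The basic clopen set in `βℕ` determined by `A ⊆ ℕ`. -/
noncomputable def VA (A : Set ℕ) : Set (StoneCech ℕ) :=
  stoneCechExtend (continuous_of_discreteTopology (f := chiB A)) ⁻¹' {true}

lemma gA_unit (A : Set ℕ) (n : ℕ) :
    stoneCechExtend (continuous_of_discreteTopology (f := chiB A)) (stoneCechUnit n) = chiB A n :=
  congrFun (stoneCechExtend_extends _) n

lemma VA_open (A : Set ℕ) : IsOpen (VA A) :=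
  (isOpen_discrete _).preimage (continuous_stoneCechExtend _)

lemma VA_closed (A : Set ℕ) : IsClosed (VA A) :=
  (isClosed_discrete _).preimage (continuous_stoneCechExtend _)

lemma unit_mem_VA {A : Set ℕ} {n : ℕ} : stoneCechUnit n ∈ VA A ↔ n ∈ A := by
  simp [VA, gA_unit, chiB]

lemma closure_compl_disj (A : Set ℕ) :
    closure (stoneCechUnit '' Aᶜ) ∩ VA A = ∅ := by
  have h : closure (stoneCechUnit '' Aᶜ) ⊆
      stoneCechExtend (continuous_of_discreteTopology (f := chiB A)) ⁻¹' {false} := by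
    apply closure_minimal
    · rintro x ⟨n, hn, rfl⟩
      simp [gA_unit, chiB]; exact hn
    · exact (isClosed_discrete _).preimage (continuous_stoneCechExtend _)
  ext x; simp only [mem_inter_iff, mem_empty_iff_false, iff_false]
  rintro ⟨hx1, hx2⟩
  have := h hx1
  simp [VA] at hx2 this
  rw [this] at hx2; exact Bool.false_ne_true hx2

lemma VA_eq_closure (A : Set ℕ) : VA A = closure (stoneCechUnit '' A) := by
  apply subset_antisymm
  · intro x hx
    have huniv : (univ : Set (StoneCech ℕ)) =
        closure (stoneCechUnit '' A) ∪ closure (stoneCechUnit '' Aᶜ) := by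
      rw [← closure_union, ← image_union, union_compl_self, image_univ]
      exact denseRange_stoneCechUnit.closure_eq.symm
    rcases (huniv ▸ mem_univ x : x ∈ _) with h | h
    · exact h
    · exact absurd (mem_inter h hx) (by rw [closure_compl_disj]; exact notMem_empty x)
  · exact closure_minimal (by rintro x ⟨n, hn, rfl⟩; exact unit_mem_VA.mpr hn) (VA_closed A)

lemma unit_injective : Function.Injective (stoneCechUnit : ℕ → StoneCech ℕ) := by
  intro m n h
  have : stoneCechUnit n ∈ VA {m} := by rw [← h]; exact unit_mem_VA.mpr rfl
  exact (unit_mem_VA.mp this).symm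

lemma singleton_isolated (n : ℕ) : IsOpen ({stoneCechUnit n} : Set (StoneCech ℕ)) := by
  have : VA {n} = {stoneCechUnit n} := by
    rw [VA_eq_closure, image_singleton, closure_singleton]
  rw [← this]; exact VA_open _

lemma VA_remainder_nonempty {A : Set ℕ} (hA : A.Infinite) :
    ∃ x ∈ VA A, x ∉ range (stoneCechUnit : ℕ → StoneCech ℕ) := by
  by_contra h
  push_neg at h
  have hsub : VA A ⊆ stoneCechUnit '' A := by
    intro x hx
    obtain ⟨n, rfl⟩ := h x hx
    exact ⟨n, unit_mem_VA.mp hx, rfl⟩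
  have heq : VA A = stoneCechUnit '' A :=
    subset_antisymm hsub (fun x ⟨n, hn, hxn⟩ => hxn ▸ unit_mem_VA.mpr hn)
  have hcomp : IsCompact (stoneCechUnit '' A) := heq ▸ (VA_closed A).isCompact
  have hfin : (stoneCechUnit '' A).Finite := by
    obtain ⟨t, hcov⟩ := hcomp.elim_finite_subcover
      (fun n : ℕ => ({stoneCechUnit n} : Set (StoneCech ℕ)))
      (fun n => singleton_isolated n)
      (by rintro x ⟨n, hn, rfl⟩; exact mem_iUnion.mpr ⟨n, rfl⟩)
    refine Finite.subset (t.finite_toSet.image stoneCechUnit) fun x hx => ?_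
    obtain ⟨n, hn⟩ := mem_iUnion.mp (hcov hx)
    simp only [mem_iUnion, mem_singleton_iff, exists_prop] at hn
    exact ⟨n, hn.1, hn.2.symm⟩
  exact hA ((hfin.preimage (unit_injective.injOn)).subset (subset_preimage_image _ _))

lemma VA_disj {A B : Set ℕ} (h : (A ∩ B).Finite) :
    VA A ∩ VA B ⊆ range (stoneCechUnit : ℕ → StoneCech ℕ) := by
  intro x ⟨hxA, hxB⟩
  have hsplit : VA A ⊆ stoneCechUnit '' (A ∩ B) ∪ closure (stoneCechUnit '' (A \ B)) := by
    rw [VA_eq_closure]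
    have : A = (A ∩ B) ∪ (A \ B) := by ext n; by_cases hn : n ∈ B <;> simp [hn]
    nth_rewrite 1 [this]
    rw [image_union, closure_union]
    gcongr
    exact ((h.image stoneCechUnit).isClosed).closure_subset
  rcases hsplit hxA with h1 | h1
  · exact (image_subset_range _ _) h1
  · exfalso
    have hsub : closure (stoneCechUnit '' (A \ B)) ⊆ closure (stoneCechUnit '' Bᶜ) :=
      closure_mono (image_mono fun n hn => hn.2)
    have : x ∈ closure (stoneCechUnit '' Bᶜ) ∩ VA B := ⟨hsub h1, hxB⟩
    rw [closure_compl_disj] at this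
    exact this

/-- The almost disjoint family indexed by branches of the binary tree. -/
noncomputable def branchSet (x : ℕ → Bool) : Set ℕ :=
  range fun n => Encodable.encode ((List.range n).map x)

lemma branch_inj (x : ℕ → Bool) :
    Function.Injective fun n => Encodable.encode ((List.range n).map x) := by
  intro m n h
  have := Encodable.encode_injective h
  have hl := congrArg List.length this
  simpa using hl

lemma branchSet_infinite (x : ℕ → Bool) : (branchSet x).Infinite :=
  infinite_range_of_injective (branch_inj x)

lemma branchSet_almost_disjoint {x y : ℕ → Bool} (hxy : x ≠ y) :
    (branchSet x ∩ branchSet y).Finite := by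
  obtain ⟨k, hk⟩ := Function.ne_iff.mp hxy
  refine Finite.subset ((finite_Iic k).image fun n => Encodable.encode ((List.range n).map x)) ?_
  rintro m ⟨⟨n, rfl⟩, ⟨n', hn'⟩⟩
  have hll := Encodable.encode_injective hn'
  have hlen : n' = n := by simpa using congrArg List.length hll
  subst hlen
  refine ⟨n', ?_, rfl⟩
  by_contra hnk
  simp only [mem_Iic, not_le] at hnk
  apply hk
  have h1 : ((List.range n').map y)[k]? = ((List.range n').map x)[k]? := by rw [hll]
  rw [List.getElem?_map, List.getElem?_map, List.getElem?_range (by omega : k < n')] at h1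
  simpa using h1.symm

lemma not_countable_funBool : ¬ Countable (ℕ → Bool) := by
  intro h
  have : Countable (Set ℕ) :=
    ((Equiv.arrowCongr (Equiv.refl ℕ) Equiv.propEquivBool.symm)).symm.injective.countable
  obtain ⟨f, hf⟩ := this.exists_injective_nat
  exact Function.cantor_injective f hf

/-- The open subset of the remainder associated to a branch. -/
noncomputable def Usub (x : ℕ → Bool) :
    Set ((Set.range (stoneCechUnit : ℕ → StoneCech ℕ))ᶜ : Set (StoneCech ℕ)) :=
  Subtype.val ⁻¹' VA (branchSet x)

lemma Usub_open (x : ℕ → Bool) : IsOpen (Usub x) :=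
  (VA_open _).preimage continuous_subtype_val

lemma Usub_nonempty (x : ℕ → Bool) : (Usub x).Nonempty := by
  obtain ⟨z, hz, hz'⟩ := VA_remainder_nonempty (branchSet_infinite x)
  exact ⟨⟨z, hz'⟩, hz⟩

lemma Usub_disjoint {x y : ℕ → Bool} (hxy : x ≠ y) : Disjoint (Usub x) (Usub y) := by
  rw [Set.disjoint_left]
  rintro ⟨z, hz⟩ hzx hzy
  exact hz (VA_disj (branchSet_almost_disjoint hxy) ⟨hzx, hzy⟩)

lemma Usub_injective : Function.Injective Usub := by
  intro x y h
  by_contra hxy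
  obtain ⟨z, hz⟩ := Usub_nonempty x
  exact (Set.disjoint_left.mp (Usub_disjoint hxy)) hz (h ▸ hz)

/-- The Stone–Čech remainder `βℕ ∖ ℕ` admits an uncountable family of pairwise disjoint
nonempty open subsets; in particular it does not have the countable chain condition,
even though `βℕ` does. -/
theorem stmt_6 :
    (∃ 𝒰 : Set (Set ((Set.range (stoneCechUnit : ℕ → StoneCech ℕ))ᶜ : Set (StoneCech ℕ))),
      ¬𝒰.Countable ∧ (∀ U ∈ 𝒰, IsOpen U) ∧ (∀ U ∈ 𝒰, U.Nonempty) ∧ 𝒰.Pairwise Disjoint) ∧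
    ¬TopCCC ((Set.range (stoneCechUnit : ℕ → StoneCech ℕ))ᶜ : Set (StoneCech ℕ)) ∧
    TopCCC (StoneCech ℕ) := by
  have hmain : ∃ 𝒰 : Set (Set ((Set.range (stoneCechUnit : ℕ → StoneCech ℕ))ᶜ :
      Set (StoneCech ℕ))),
      ¬𝒰.Countable ∧ (∀ U ∈ 𝒰, IsOpen U) ∧ (∀ U ∈ 𝒰, U.Nonempty) ∧ 𝒰.Pairwise Disjoint := by
    refine ⟨range Usub, ?_, ?_, ?_, ?_⟩
    · intro hc
      have : (Usub ⁻¹' range Usub).Countable := hc.preimage Usub_injective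
      rw [preimage_range] at this
      exact not_countable_funBool (countable_univ_iff.mp this)
    · rintro U ⟨x, rfl⟩; exact Usub_open x
    · rintro U ⟨x, rfl⟩; exact Usub_nonempty x
    · rintro U ⟨x, rfl⟩ V ⟨y, rfl⟩ hUV
      exact Usub_disjoint (fun hxy => hUV (by rw [hxy]))
  refine ⟨hmain, ?_, ?_⟩
  · intro hccc
    obtain ⟨𝒰, hnc, ho, hne, hd⟩ := hmain
    exact hnc (hccc 𝒰 ho hne hd)
  · intro 𝒰 ho hne hd
    have hpick : ∀ U : 𝒰, ∃ n : ℕ, stoneCechUnit n ∈ (U : Set (StoneCech ℕ)) := by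
      rintro ⟨U, hU⟩
      exact denseRange_stoneCechUnit.exists_mem_open (ho U hU) (hne U hU)
    choose f hf using hpick
    have hfinj : Function.Injective f := by
      rintro ⟨U, hU⟩ ⟨V, hV⟩ h
      ext1
      by_contra hUV
      exact Set.disjoint_left.mp (hd hU hV hUV) (hf ⟨U, hU⟩) (h ▸ hf ⟨V, hV⟩)
    exact countable_coe_iff.mp hfinj.countable
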